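/- Let R be a commutative ring which is torsion-free in the sense that for every natural number n > 0, multiplication by n is injective on R (n•x = 0 implies x = 0). If f, g ∈ R[[t]] both have constant coefficient 1 and satisfy t·f'·g = t·g'·f (i.e., they have the same ghost series), then f = g. In other words, the ghost map is injective on power series with constant coefficient 1. -/

import Mathlib

open PowerSeries

/-- Over a torsion-free commutative ring (multiplication by every `n > 0` is injective),
the ghost map is injective on power series with constant coefficient `1`: if
`t·f'·g = t·g'·f` (i.e. `f` and `g` have the same ghost series), then `f = g`. -/
theorem ghost_map_injective_of_torsionFree (R : Type*) [CommRing R]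
    (htf : ∀ n : ℕ, 0 < n → ∀ x : R, n • x = 0 → x = 0)
    (f g : R⟦X⟧) (hf : constantCoeff f = 1) (hg : constantCoeff g = 1)
    (h : PowerSeries.X * d⁄dX R f * g = PowerSeries.X * d⁄dX R g * f) :
    f = g := by
  have h' : d⁄dX R f * g = d⁄dX R g * f := by
    ext n
    have := congrArg (coeff (n + 1)) h
    rwa [mul_assoc, mul_assoc, coeff_succ_X_mul, coeff_succ_X_mul] at this
  have hD : (d⁄dX R f - d⁄dX R g) * g = d⁄dX R g * (f - g) := by
    linear_combination h'
  ext n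
  induction n using Nat.strong_induction_on with
  | _ n ih =>
    match n with
    | 0 =>
      simpa [coeff_zero_eq_constantCoeff] using hf.trans hg.symm
    | n + 1 =>
      have key := congrArg (coeff n) hD
      rw [coeff_mul, coeff_mul] at key
      have hR : ∑ p ∈ Finset.HasAntidiagonal.antidiagonal n,
          coeff p.1 (d⁄dX R g) * coeff p.2 (f - g) = 0 := by
        apply Finset.sum_eq_zero
        rintro ⟨i, j⟩ hij
        have hij' : i + j = n := Finset.HasAntidiagonal.mem_antidiagonal.mp hij
        have hj : j < n + 1 := Nat.lt_succ_of_le (hij' ▸ Nat.le_add_left j i)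
        simp [map_sub, ih j hj]
      have hL : ∑ p ∈ Finset.HasAntidiagonal.antidiagonal n,
          coeff p.1 (d⁄dX R f - d⁄dX R g) * coeff p.2 g
          = (coeff (n + 1) f - coeff (n + 1) g) * (n + 1) := by
        rw [Finset.sum_eq_single_of_mem (n, 0)]
        · simp [map_sub, coeff_derivative, coeff_zero_eq_constantCoeff, hg, sub_mul]
        · simp
        · rintro ⟨i, j⟩ hij hne
          have hij' : i + j = n := Finset.HasAntidiagonal.mem_antidiagonal.mp hij
          have hi : i < n := by
            by_contra h1
            apply hne
            have hin : i = n := le_antisymm (hij' ▸ Nat.le_add_right i j) (le_of_not_gt h1)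
            subst hin
            simp only [Prod.mk.injEq]
            exact ⟨trivial, by omega⟩
          have : coeff (i + 1) f = coeff (i + 1) g := ih (i + 1) (by omega)
          simp [map_sub, coeff_derivative, this]
      rw [hL, hR] at key
      have : (n + 1) • (coeff (n + 1) f - coeff (n + 1) g) = 0 := by
        rw [nsmul_eq_mul]
        push_cast
        linear_combination key
      have := htf (n + 1) (Nat.succ_pos n) _ this
      linear_combination this
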